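/- Let a₁, a₂ be coprime positive integers, both greater than 1. If x is a positive integer with 0 < x < a₁·a₂, x is not divisible by a₁, and x is not divisible by a₂, then exactly one of x and a₁·a₂ − x belongs to the numerical semigroup generated by a₁ and a₂. -/
import Mathlib

-- auxiliary: reduce first coefficient mod a₂
lemma reduce_coeff (a₁ a₂ y : ℕ) (h₂ : 0 < a₂)
    (h : ∃ l₁ l₂ : ℕ, y = l₁ * a₁ + l₂ * a₂) :
    ∃ l₁ l₂ : ℕ, l₁ < a₂ ∧ y = l₁ * a₁ + l₂ * a₂ := by
  obtain ⟨l₁, l₂, rfl⟩ := h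
  refine ⟨l₁ % a₂, l₂ + (l₁ / a₂) * a₁, Nat.mod_lt _ h₂, ?_⟩
  nlinarith [Nat.div_add_mod l₁ a₂]

theorem stmt_2 (a₁ a₂ : ℕ) (h₁ : 1 < a₁) (h₂ : 1 < a₂)
    (hcop : Nat.gcd a₁ a₂ = 1) (x : ℕ) (hx : 0 < x) (hxlt : x < a₁ * a₂)
    (hd₁ : ¬ a₁ ∣ x) (hd₂ : ¬ a₂ ∣ x) :
    Xor' (∃ l₁ l₂ : ℕ, x = l₁ * a₁ + l₂ * a₂)
         (∃ l₁ l₂ : ℕ, a₁ * a₂ - x = l₁ * a₁ + l₂ * a₂) := by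
  haveI : NeZero a₂ := ⟨by omega⟩
  -- not both
  have hnotboth : ¬ ((∃ l₁ l₂ : ℕ, x = l₁ * a₁ + l₂ * a₂) ∧
      (∃ l₁ l₂ : ℕ, a₁ * a₂ - x = l₁ * a₁ + l₂ * a₂)) := by
    rintro ⟨hA, hB⟩
    obtain ⟨l₁, l₂, hl₁, hl⟩ := reduce_coeff a₁ a₂ x (by omega) hA
    obtain ⟨m₁, m₂, hm₁, hm⟩ := reduce_coeff a₁ a₂ _ (by omega) hB
    have hsum : a₁ * a₂ = (l₁ + m₁) * a₁ + (l₂ + m₂) * a₂ := by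
      have h' : a₁ * a₂ = x + (a₁ * a₂ - x) := by omega
      rw [h', hm, hl]; ring
    have hdvd : a₂ ∣ (l₁ + m₁) * a₁ := by
      have h' : a₂ ∣ (l₁ + m₁) * a₁ + (l₂ + m₂) * a₂ := hsum ▸ Dvd.intro_left a₁ rfl
      exact (Nat.dvd_add_right (Dvd.intro_left _ rfl)).mp
        (by rwa [Nat.add_comm] at h')
    have hcop' : Nat.Coprime a₂ a₁ := (Nat.coprime_iff_gcd_eq_one.mpr hcop).symm
    obtain ⟨k, hk⟩ := hcop'.dvd_of_dvd_mul_right hdvd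
    have hk2 : k < 2 := by
      by_contra h
      push_neg at h
      have h2 : a₂ * 2 ≤ a₂ * k := Nat.mul_le_mul (le_refl a₂) h
      linarith [hk, hl₁, hm₁]
    interval_cases k
    · -- l₁ + m₁ = 0, so l₁ = 0 and x = l₂ * a₂
      have hl0 : l₁ = 0 := by omega
      exact hd₂ ⟨l₂, by rw [hl, hl0]; ring⟩
    · -- l₁ + m₁ = a₂, so l₂ + m₂ = 0, so x = l₁ * a₁
      have e : (l₁ + m₁) * a₁ = a₂ * a₁ := by rw [hk]; ring
      have hz : (l₂ + m₂) * a₂ = 0 := by linarith [mul_comm a₁ a₂]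
      have hl20 : l₂ = 0 := by
        rcases Nat.mul_eq_zero.mp hz with h | h <;> omega
      exact hd₁ ⟨l₁, by rw [hl, hl20]; ring⟩
  -- at least one
  have hunit : IsUnit (a₁ : ZMod a₂) :=
    (ZMod.isUnit_iff_coprime a₁ a₂).mpr (Nat.coprime_iff_gcd_eq_one.mpr hcop)
  set u : ℕ := ((x : ZMod a₂) * (a₁ : ZMod a₂)⁻¹).val with hu
  have hult : u < a₂ := ZMod.val_lt _
  have hmod : u * a₁ ≡ x [MOD a₂] := by
    apply (ZMod.natCast_eq_natCast_iff _ _ _).mp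
    push_cast
    rw [hu, ZMod.natCast_val, ZMod.cast_id, mul_assoc,
      ZMod.inv_mul_of_unit _ hunit, mul_one]
  rcases le_or_gt (u * a₁) x with hle | hlt
  · -- x representable
    obtain ⟨c, hc⟩ := (Nat.modEq_iff_dvd' hle).mp hmod
    have hxeq : x = a₂ * c + u * a₁ := Nat.eq_add_of_sub_eq hle hc
    left
    refine ⟨⟨u, c, ?_⟩, fun hB => hnotboth ⟨⟨u, c, ?_⟩, hB⟩⟩ <;>
      linarith [mul_comm a₂ c]
  · -- a₁a₂ - x representable
    have hxle : x ≤ u * a₁ := le_of_lt hlt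
    obtain ⟨c, hc⟩ := (Nat.modEq_iff_dvd' hxle).mp hmod.symm
    have e2 : u * a₁ < a₂ * a₁ := Nat.mul_lt_mul_of_pos_right hult (by omega)
    have hkey : a₁ * a₂ - x = (a₂ - u) * a₁ + c * a₂ := by
      have hc' : u * a₁ = a₂ * c + x := Nat.eq_add_of_sub_eq hxle hc
      have e1' : (a₂ - u) * a₁ + u * a₁ = a₂ * a₁ := by
        rw [Nat.sub_mul]; exact Nat.sub_add_cancel e2.le
      have h4 : a₁ * a₂ = (a₂ - u) * a₁ + c * a₂ + x := by
        linarith [mul_comm a₁ a₂, mul_comm a₂ c]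
      exact Nat.sub_eq_of_eq_add h4
    right
    exact ⟨⟨a₂ - u, c, hkey⟩, fun hA => hnotboth ⟨hA, ⟨a₂ - u, c, hkey⟩⟩⟩
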